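/- arXiv:1403.8042 — 2 statements merged into one kernel-verified Lean document; each statement's English description precedes it below -/
import Mathlib

section
/- Let X and Y be independent exponentially distributed random variables with means Ω_X > 0 and Ω_Y > 0, and let δ1, δ2, x0, y0 > 0 with δ2·y0 ≤ δ1·x0. Define P_{R,st}(x,y) = max{δ1/y, δ2/x} for x ≥ x0 and y ≥ y0, and P_{R,st}(x,y) = 0 otherwise. Then the maximum average relay output power equals E[P_{R,st}(X,Y)] = (δ1/Ω_Y)·e^{−x0/Ω_X}·[E1(y0/Ω_Y) − E1(δ1·x0/(δ2·Ω_Y))] + (δ1/Ω_Y + δ2/Ω_X)·E1(x0/Ω_X + δ1·x0/(δ2·Ω_Y)), where E1(z) = ∫_z^{∞}(e^{−t}/t) dt. -/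
open MeasureTheory ProbabilityTheory

/-- The exponential integral `E1(z) = ∫_z^∞ e^{-t}/t dt`. -/
noncomputable def expInt (z : ℝ) : ℝ := ∫ t in Set.Ioi z, Real.exp (-t) / t

open Set Real Filter

lemma E1integrable {s : ℝ} (hs : 0 < s) :
    IntegrableOn (fun t => Real.exp (-t) / t) (Ioi s) := by
  have hmeas : AEStronglyMeasurable (fun t => Real.exp (-t) / t)
      (volume.restrict (Ioi s)) :=
    (Measurable.div (Real.measurable_exp.comp measurable_neg) measurable_id).aestronglyMeasurable
  have hint : IntegrableOn (fun t : ℝ => Real.exp (-t)) (Ioi s) := by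
    simpa using exp_neg_integrableOn_Ioi s one_pos
  refine Integrable.mono' (hint.div_const s) hmeas ?_
  filter_upwards [ae_restrict_mem measurableSet_Ioi] with t ht
  have ht' : s < t := ht
  rw [Real.norm_eq_abs, abs_div, abs_of_pos (exp_pos _), abs_of_pos (hs.trans ht')]
  exact div_le_div_of_nonneg_left (exp_pos _).le (hs) ht'.le

lemma expInt_nonneg {s : ℝ} (hs : 0 < s) : 0 ≤ expInt s := by
  refine setIntegral_nonneg measurableSet_Ioi fun t ht => ?_
  exact div_nonneg (exp_pos _).le ((hs.trans ht).le)

lemma expInt_le {s : ℝ} (hs : 0 < s) : expInt s ≤ Real.exp (-s) / s := by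
  have hint : IntegrableOn (fun t : ℝ => Real.exp (-t)) (Ioi s) := by
    simpa using exp_neg_integrableOn_Ioi s one_pos
  have h : expInt s ≤ ∫ t in Ioi s, Real.exp (-t) / s := by
    refine setIntegral_mono_on (E1integrable hs)
      (hint.div_const s) measurableSet_Ioi fun t ht => ?_
    exact div_le_div_of_nonneg_left (exp_pos _).le hs (le_of_lt ht)
  refine h.trans ?_
  rw [integral_div, integral_exp_neg_Ioi]

lemma expInt_anti {s u : ℝ} (hs : 0 < s) (hsu : s ≤ u) : expInt u ≤ expInt s := by
  unfold expInt
  refine setIntegral_mono_set (E1integrable hs) ?_ ?_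
  · filter_upwards [ae_restrict_mem (μ := volume) (s := Ioi s) measurableSet_Ioi] with t ht
    simp only [Pi.zero_apply]
    exact div_nonneg (exp_pos _).le ((hs.trans ht).le)
  · exact HasSubset.Subset.eventuallyLE (Ioi_subset_Ioi hsu)

lemma expInt_tendsto_zero : Filter.Tendsto expInt Filter.atTop (nhds 0) := by
  have h1 : Filter.Tendsto (fun s : ℝ => Real.exp (-s) / s) Filter.atTop (nhds 0) := by
    have := Real.tendsto_exp_neg_atTop_nhds_zero
    have h2 : Filter.Tendsto (fun s : ℝ => s⁻¹) Filter.atTop (nhds 0) :=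
      tendsto_inv_atTop_zero
    simpa [div_eq_mul_inv] using this.mul h2
  refine squeeze_zero' ?_ ?_ h1
  · filter_upwards [Filter.eventually_gt_atTop 0] with s hs using expInt_nonneg hs
  · filter_upwards [Filter.eventually_gt_atTop 0] with s hs using expInt_le hs

lemma expInt_sub {s u : ℝ} (hs : 0 < s) (hsu : s ≤ u) :
    expInt s - expInt u = ∫ t in s..u, Real.exp (-t) / t := by
  have hu : 0 < u := hs.trans_le hsu
  have hsplit : (Ioc s u) ∪ (Ioi u) = Ioi s := Ioc_union_Ioi_eq_Ioi hsu
  have h := setIntegral_union (f := fun t => Real.exp (-t) / t) (μ := volume)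
    Ioc_disjoint_Ioi_same measurableSet_Ioi
    ((E1integrable hs).mono Ioc_subset_Ioi_self le_rfl) (E1integrable hu)
  rw [hsplit] at h
  rw [intervalIntegral.integral_of_le hsu]
  unfold expInt
  linarith [h]

lemma expInt_hasDerivAt {z : ℝ} (hz : 0 < z) :
    HasDerivAt expInt (-(Real.exp (-z) / z)) z := by
  set s := z / 2 with hs_def
  have hs : 0 < s := by positivity
  have hsz : s < z := by simp [hs_def]; linarith
  have hmeas : Measurable fun t : ℝ => Real.exp (-t) / t :=
    (Real.measurable_exp.comp measurable_neg).div measurable_id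
  have hint : IntervalIntegrable (fun t => Real.exp (-t) / t) volume s z := by
    rw [intervalIntegrable_iff_integrableOn_Ioc_of_le hsz.le]
    exact (E1integrable hs).mono Ioc_subset_Ioi_self le_rfl
  have hG : HasDerivAt (fun w => ∫ t in s..w, Real.exp (-t) / t) (Real.exp (-z) / z) z := by
    refine intervalIntegral.integral_hasDerivAt_right hint
      ⟨Set.univ, Filter.univ_mem, hmeas.aestronglyMeasurable⟩ ?_
    exact ((Real.continuous_exp.comp continuous_neg).continuousAt).div continuousAt_id hz.ne'
  have hG' : HasDerivAt (fun w => expInt s - ∫ t in s..w, Real.exp (-t) / t)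
      (-(Real.exp (-z) / z)) z := hG.const_sub (expInt s)
  refine hG'.congr_of_eventuallyEq ?_
  filter_upwards [isOpen_Ioi.mem_nhds (show z ∈ Ioi s from hsz)] with w hw
  have := expInt_sub hs (le_of_lt hw)
  linarith

lemma continuousOn_expInt : ContinuousOn expInt (Ioi 0) :=
  fun z hz => ((expInt_hasDerivAt hz).continuousAt).continuousWithinAt

lemma integrableOn_exp_div {k s : ℝ} (hk : 0 < k) (hs : 0 < s) :
    IntegrableOn (fun x => Real.exp (-(k * x)) / x) (Ioi s) := by
  have hmeas : AEStronglyMeasurable (fun x => Real.exp (-(k * x)) / x)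
      (volume.restrict (Ioi s)) :=
    ((Real.measurable_exp.comp (measurable_const.mul measurable_id).neg).div
      measurable_id).aestronglyMeasurable
  refine Integrable.mono' ((exp_neg_integrableOn_Ioi s hk).div_const s) hmeas ?_
  filter_upwards [ae_restrict_mem measurableSet_Ioi] with t ht
  have ht' : s < t := ht
  rw [Real.norm_eq_abs, abs_div, abs_of_pos (exp_pos _), abs_of_pos (hs.trans ht')]
  have := div_le_div_of_nonneg_left (exp_pos (-(k*t))).le hs ht'.le
  simpa [neg_mul] using this

lemma integral_exp_div_Ioi {k s : ℝ} (hk : 0 < k) (hs : 0 < s) :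
    ∫ x in Ioi s, Real.exp (-(k * x)) / x = expInt (k * s) := by
  have hsub := integral_comp_mul_left_Ioi (fun t => Real.exp (-t) / t) s hk
  have hcongr : ∫ x in Ioi s, Real.exp (-(k * x)) / x
      = ∫ x in Ioi s, k * (Real.exp (-(k * x)) / (k * x)) := by
    refine setIntegral_congr_fun measurableSet_Ioi fun x hx => ?_
    have hx' : 0 < x := hs.trans hx
    field_simp
  rw [hcongr, MeasureTheory.integral_const_mul, hsub, smul_eq_mul, ← mul_assoc,
    mul_inv_cancel₀ hk.ne', one_mul]
  rfl

lemma integral_exp_scaled_Ioi {k s : ℝ} (hk : 0 < k) :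
    ∫ x in Ioi s, k * Real.exp (-(k * x)) = Real.exp (-(k * s)) := by
  have hsub := integral_comp_mul_left_Ioi (fun t => Real.exp (-t)) s hk
  rw [MeasureTheory.integral_const_mul, hsub, integral_exp_neg_Ioi, smul_eq_mul, ← mul_assoc,
    mul_inv_cancel₀ hk.ne', one_mul]

lemma intervalIntegral_exp_div {k s u : ℝ} (hk : 0 < k) (hs : 0 < s) (hsu : s ≤ u) :
    ∫ y in s..u, Real.exp (-(k * y)) / y = expInt (k * s) - expInt (k * u) := by
  have hsub := intervalIntegral.integral_comp_mul_left
    (a := s) (b := u) (fun t => Real.exp (-t) / t) hk.ne'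
  have hcongr : ∫ y in s..u, Real.exp (-(k * y)) / y
      = ∫ y in s..u, k * (Real.exp (-(k * y)) / (k * y)) := by
    refine intervalIntegral.integral_congr fun y hy => ?_
    rw [Set.uIcc_of_le hsu] at hy
    have hy' : 0 < y := hs.trans_le hy.1
    field_simp
  rw [hcongr, intervalIntegral.integral_const_mul, hsub, smul_eq_mul, ← mul_assoc,
    mul_inv_cancel₀ hk.ne', one_mul, ← expInt_sub (by positivity) (by nlinarith)]

lemma integrableOn_exp_expInt {a c s : ℝ} (ha : 0 < a) (hc : 0 < c) (hs : 0 < s) :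
    IntegrableOn (fun x => a * Real.exp (-(a * x)) * expInt (c * x)) (Ioi s) := by
  have hmeas : AEStronglyMeasurable (fun x => a * Real.exp (-(a * x)) * expInt (c * x))
      (volume.restrict (Ioi s)) := by
    apply ContinuousOn.aestronglyMeasurable _ measurableSet_Ioi
    refine ContinuousOn.mul
      ((continuous_const.mul (Real.continuous_exp.comp
        (continuous_const.mul continuous_id).neg)).continuousOn) ?_
    refine continuousOn_expInt.comp
      ((continuous_const.mul continuous_id).continuousOn) ?_
    intro x hx
    exact mem_Ioi.mpr (mul_pos hc (hs.trans hx))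
  have hb : IntegrableOn (fun x => (a * expInt (c * s)) * Real.exp (-(a * x))) (Ioi s) := by
    have := (exp_neg_integrableOn_Ioi s ha).const_mul (a * expInt (c * s))
    simpa [neg_mul, IntegrableOn] using this
  refine Integrable.mono' hb hmeas ?_
  filter_upwards [ae_restrict_mem measurableSet_Ioi] with x hx
  have hx' : s < x := hx
  have hxpos : 0 < x := hs.trans hx'
  have h1 : 0 ≤ expInt (c * x) := expInt_nonneg (mul_pos hc hxpos)
  have h2 : expInt (c * x) ≤ expInt (c * s) :=
    expInt_anti (mul_pos hc hs) (by nlinarith)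
  rw [Real.norm_eq_abs, abs_of_nonneg (mul_nonneg (mul_nonneg ha.le (exp_pos _).le) h1)]
  calc a * Real.exp (-(a * x)) * expInt (c * x)
      ≤ a * Real.exp (-(a * x)) * expInt (c * s) := by
        apply mul_le_mul_of_nonneg_left h2 (by positivity)
    _ = a * expInt (c * s) * Real.exp (-(a * x)) := by ring

lemma byparts {a c s : ℝ} (ha : 0 < a) (hc : 0 < c) (hs : 0 < s) :
    ∫ x in Ioi s, a * Real.exp (-(a * x)) * expInt (c * x)
      = Real.exp (-(a * s)) * expInt (c * s) - expInt ((a + c) * s) := by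
  have hac : 0 < a + c := by linarith
  have hint1 := integrableOn_exp_expInt ha hc hs
  have hint2 := integrableOn_exp_div (k := a + c) hac hs
  have hderiv : ∀ x ∈ Ici s, HasDerivAt (fun x => -(Real.exp (-(a * x)) * expInt (c * x)))
      (a * Real.exp (-(a * x)) * expInt (c * x) + Real.exp (-((a + c) * x)) / x) x := by
    intro x hx
    have hxpos : 0 < x := hs.trans_le hx
    have h1 : HasDerivAt (fun x => Real.exp (-(a * x))) (-(a * Real.exp (-(a * x)))) x := by
      have := (ProbabilityTheory.hasDerivAt_neg_exp_mul_exp (r := a) (x := x)).neg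
      simpa [Pi.neg_def] using this
    have h2 : HasDerivAt (fun x => expInt (c * x)) (-(Real.exp (-(c * x)) / (c * x)) * c) x := by
      have hin : HasDerivAt (fun y : ℝ => c * y) c x := by
        simpa using (hasDerivAt_id x).const_mul c
      exact (expInt_hasDerivAt (mul_pos hc hxpos)).comp x hin
    have h3 := (h1.mul h2).neg
    refine h3.congr_deriv ?_
    symm
    have hcx : (c : ℝ) * x ≠ 0 := (mul_pos hc hxpos).ne'
    rw [show ((a + c) * x) = (a * x) + (c * x) by ring, neg_add, Real.exp_add]
    field_simp
    ring
  have htend : Filter.Tendsto (fun x => -(Real.exp (-(a * x)) * expInt (c * x)))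
      Filter.atTop (nhds 0) := by
    have ha' : Filter.Tendsto (fun x : ℝ => a * x) Filter.atTop Filter.atTop :=
      Filter.Tendsto.const_mul_atTop ha Filter.tendsto_id
    have hc' : Filter.Tendsto (fun x : ℝ => c * x) Filter.atTop Filter.atTop :=
      Filter.Tendsto.const_mul_atTop hc Filter.tendsto_id
    have he : Filter.Tendsto (fun x : ℝ => Real.exp (-(a * x))) Filter.atTop (nhds 0) :=
      Real.tendsto_exp_neg_atTop_nhds_zero.comp ha'
    have hE : Filter.Tendsto (fun x : ℝ => expInt (c * x)) Filter.atTop (nhds 0) :=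
      expInt_tendsto_zero.comp hc'
    have := (he.mul hE).neg
    simpa using this
  have hmain := integral_Ioi_of_hasDerivAt_of_tendsto' hderiv (hint1.add hint2) htend
  rw [integral_add hint1 hint2, integral_exp_div_Ioi hac hs] at hmain
  simp only [zero_sub, neg_neg] at hmain
  linarith

lemma pdfReal_eq (r x : ℝ) :
    exponentialPDFReal r x = if 0 ≤ x then r * Real.exp (-(r * x)) else 0 := by
  rw [exponentialPDFReal, gammaPDFReal]
  simp only [rpow_one, Real.Gamma_one, div_one, sub_self, rpow_zero, mul_one]

lemma expMeasure_eq (r : ℝ) :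
    expMeasure r
      = volume.withDensity (fun x => ((exponentialPDFReal r x).toNNReal : ENNReal)) := by
  rfl

lemma integral_expMeasure {r : ℝ} (hr : 0 < r) (f : ℝ → ℝ) :
    ∫ x, f x ∂(expMeasure r) = ∫ x, exponentialPDFReal r x * f x := by
  rw [expMeasure_eq,
    integral_withDensity_eq_integral_smul (measurable_exponentialPDFReal r).real_toNNReal]
  congr 1
  ext x
  rw [NNReal.smul_def, smul_eq_mul, Real.coe_toNNReal _ (exponentialPDFReal_nonneg hr x)]

lemma inner_eval {rY δ1 δ2 x0 y0 x : ℝ} (hrY : 0 < rY) (hδ1 : 0 < δ1) (hδ2 : 0 < δ2)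
    (hx0 : 0 < x0) (hy0 : 0 < y0) (hx : x0 ≤ x) (hM : δ2 * y0 ≤ δ1 * x) :
    ∫ y, exponentialPDFReal rY y *
        (if x0 ≤ x ∧ y0 ≤ y then max (δ1 / y) (δ2 / x) else 0)
      = δ1 * rY * (expInt (rY * y0) - expInt (rY * (δ1 * x / δ2)))
        + (δ2 / x) * Real.exp (-(rY * (δ1 * x / δ2))) := by
  have hxpos : 0 < x := hx0.trans_le hx
  set M : ℝ := δ1 * x / δ2 with hMdef
  have hMpos : 0 < M := by positivity
  have hy0M : y0 ≤ M := by
    rw [hMdef, le_div_iff₀ hδ2]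
    nlinarith
  have hstep1 : (fun y => exponentialPDFReal rY y *
      (if x0 ≤ x ∧ y0 ≤ y then max (δ1 / y) (δ2 / x) else 0))
      = Set.indicator (Ici y0) (fun y => rY * Real.exp (-(rY * y)) * max (δ1 / y) (δ2 / x)) := by
    funext y
    by_cases hy : y0 ≤ y
    · rw [Set.indicator_of_mem (mem_Ici.mpr hy), if_pos ⟨hx, hy⟩, pdfReal_eq,
        if_pos (hy0.le.trans hy)]
    · rw [Set.indicator_of_notMem (by simpa using hy), if_neg (fun h => hy h.2), mul_zero]
  rw [hstep1, integral_indicator measurableSet_Ici, integral_Ici_eq_integral_Ioi]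
  have hunion : Ioc y0 M ∪ Ioi M = Ioi y0 := Ioc_union_Ioi_eq_Ioi hy0M
  -- integrands on pieces
  have hEq1 : EqOn (fun y => rY * Real.exp (-(rY * y)) * max (δ1 / y) (δ2 / x))
      (fun y => (δ1 * rY) * (Real.exp (-(rY * y)) / y)) (Ioc y0 M) := by
    intro y hy
    have hypos : 0 < y := hy0.trans_le hy.1.le
    have hmax : max (δ1 / y) (δ2 / x) = δ1 / y := by
      refine max_eq_left ?_
      rw [div_le_div_iff₀ hxpos hypos]
      have h2 : y * δ2 ≤ δ1 * x := (le_div_iff₀ hδ2).mp (hMdef ▸ hy.2)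
      nlinarith
    simp only [hmax]
    field_simp
  have hEq2 : EqOn (fun y => rY * Real.exp (-(rY * y)) * max (δ1 / y) (δ2 / x))
      (fun y => (δ2 / x) * (rY * Real.exp (-(rY * y)))) (Ioi M) := by
    intro y hy
    have hMy : M < y := hy
    have hypos : 0 < y := hMpos.trans hMy
    have hmax : max (δ1 / y) (δ2 / x) = δ2 / x := by
      refine max_eq_right ?_
      rw [div_le_div_iff₀ hypos hxpos]
      have h2 : δ1 * x = δ2 * M := by rw [hMdef]; field_simp
      nlinarith
    simp only [hmax]
    ring
  have hnice1 : IntegrableOn (fun y => (δ1 * rY) * (Real.exp (-(rY * y)) / y)) (Ioc y0 M) :=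
    IntegrableOn.mono_set ((integrableOn_exp_div hrY hy0).const_mul (δ1 * rY))
      Ioc_subset_Ioi_self
  have hint1 : IntegrableOn (fun y => rY * Real.exp (-(rY * y)) * max (δ1 / y) (δ2 / x))
      (Ioc y0 M) := IntegrableOn.congr_fun hnice1 hEq1.symm measurableSet_Ioc
  have hnice2 : IntegrableOn (fun y => (δ2 / x) * (rY * Real.exp (-(rY * y)))) (Ioi M) := by
    have h := (exp_neg_integrableOn_Ioi M hrY).const_mul ((δ2 / x) * rY)
    refine IntegrableOn.congr_fun h (fun y _ => ?_) measurableSet_Ioi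
    simp only [neg_mul]
    ring
  have hint2 : IntegrableOn (fun y => rY * Real.exp (-(rY * y)) * max (δ1 / y) (δ2 / x))
      (Ioi M) := IntegrableOn.congr_fun hnice2 hEq2.symm measurableSet_Ioi
  rw [← hunion, setIntegral_union Ioc_disjoint_Ioi_same measurableSet_Ioi hint1 hint2,
    setIntegral_congr_fun measurableSet_Ioc hEq1,
    setIntegral_congr_fun measurableSet_Ioi hEq2,
    MeasureTheory.integral_const_mul, MeasureTheory.integral_const_mul,
    ← intervalIntegral.integral_of_le hy0M, intervalIntegral_exp_div hrY hy0 hy0M,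
    integral_exp_scaled_Ioi hrY]

lemma integrableOn_exp_scaled {k s : ℝ} (hk : 0 < k) (C : ℝ) :
    IntegrableOn (fun x => C * (k * Real.exp (-(k * x)))) (Ioi s) := by
  have h := (exp_neg_integrableOn_Ioi s hk).const_mul (C * k)
  refine IntegrableOn.congr_fun h (fun y _ => ?_) measurableSet_Ioi
  simp only [neg_mul]; ring

lemma outer_eval {rX rY δ1 δ2 x0 y0 : ℝ} (hrX : 0 < rX) (hrY : 0 < rY)
    (hδ1 : 0 < δ1) (hδ2 : 0 < δ2) (hx0 : 0 < x0) (hy0 : 0 < y0) :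
    ∫ x, exponentialPDFReal rX x * (if x0 ≤ x then
        (δ1 * rY * (expInt (rY * y0) - expInt (rY * (δ1 * x / δ2)))
          + (δ2 / x) * Real.exp (-(rY * (δ1 * x / δ2)))) else 0)
      = δ1 * rY * Real.exp (-(rX * x0)) *
          (expInt (rY * y0) - expInt ((rY * δ1 / δ2) * x0))
        + (δ1 * rY + δ2 * rX) * expInt ((rX + rY * δ1 / δ2) * x0) := by
  set cc : ℝ := rY * δ1 / δ2 with hccdef
  have hcc : 0 < cc := by positivity
  set K : ℝ := δ1 * rY * expInt (rY * y0) with hKdef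
  have hstep1 : (fun x => exponentialPDFReal rX x * (if x0 ≤ x then
      (δ1 * rY * (expInt (rY * y0) - expInt (rY * (δ1 * x / δ2)))
        + (δ2 / x) * Real.exp (-(rY * (δ1 * x / δ2)))) else 0))
      = Set.indicator (Ici x0) (fun x => rX * Real.exp (-(rX * x)) *
        (δ1 * rY * (expInt (rY * y0) - expInt (rY * (δ1 * x / δ2)))
          + (δ2 / x) * Real.exp (-(rY * (δ1 * x / δ2))))) := by
    funext x
    by_cases hx : x0 ≤ x
    · rw [Set.indicator_of_mem (mem_Ici.mpr hx), if_pos hx, pdfReal_eq,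
        if_pos (hx0.le.trans hx)]
    · rw [Set.indicator_of_notMem (by simpa using hx), if_neg hx, mul_zero]
  rw [hstep1, integral_indicator measurableSet_Ici, integral_Ici_eq_integral_Ioi]
  have hEq : EqOn (fun x => rX * Real.exp (-(rX * x)) *
      (δ1 * rY * (expInt (rY * y0) - expInt (rY * (δ1 * x / δ2)))
        + (δ2 / x) * Real.exp (-(rY * (δ1 * x / δ2)))))
      (fun x => (K * (rX * Real.exp (-(rX * x)))
        - (δ1 * rY) * (rX * Real.exp (-(rX * x)) * expInt (cc * x)))
        + (rX * δ2) * (Real.exp (-((rX + cc) * x)) / x)) (Ioi x0) := by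
    intro x hx
    have hxpos : 0 < x := hx0.trans hx
    have harg : rY * (δ1 * x / δ2) = cc * x := by rw [hccdef]; field_simp
    simp only [harg, hKdef]
    rw [show (-((rX + cc) * x)) = (-(rX * x)) + (-(cc * x)) by ring, Real.exp_add]
    field_simp
  rw [setIntegral_congr_fun measurableSet_Ioi hEq]
  have hI1 : IntegrableOn (fun x => K * (rX * Real.exp (-(rX * x)))) (Ioi x0) :=
    integrableOn_exp_scaled hrX K
  have hI2 : IntegrableOn (fun x => (δ1 * rY) * (rX * Real.exp (-(rX * x)) * expInt (cc * x)))
      (Ioi x0) := (integrableOn_exp_expInt hrX hcc hx0).const_mul (δ1 * rY)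
  have hI3 : IntegrableOn (fun x => (rX * δ2) * (Real.exp (-((rX + cc) * x)) / x)) (Ioi x0) :=
    (integrableOn_exp_div (by positivity) hx0).const_mul (rX * δ2)
  have hI12 : IntegrableOn (fun x => K * (rX * Real.exp (-(rX * x)))
      - (δ1 * rY) * (rX * Real.exp (-(rX * x)) * expInt (cc * x))) (Ioi x0) := hI1.sub hI2
  rw [integral_add hI12 hI3, integral_sub hI1 hI2,
    MeasureTheory.integral_const_mul K, integral_exp_scaled_Ioi hrX,
    MeasureTheory.integral_const_mul (δ1 * rY), byparts hrX hcc hx0,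
    MeasureTheory.integral_const_mul (rX * δ2), integral_exp_div_Ioi (by positivity) hx0, hKdef]
  ring


/-- maximum average relay output power of the untruncated minimum short-term
allocation `P_{R,st}` in the regime `δ2 y0 ≤ δ1 x0`. -/
theorem stmt_10 {Ωsp : Type*} [MeasurableSpace Ωsp] (μ : Measure Ωsp)
    [IsProbabilityMeasure μ]
    (X Y : Ωsp → ℝ) (hX : Measurable X) (hY : Measurable Y)
    (hindep : IndepFun X Y μ)
    (ΩX ΩY δ1 δ2 x0 y0 : ℝ)
    (hΩX : 0 < ΩX) (hΩY : 0 < ΩY) (hδ1 : 0 < δ1) (hδ2 : 0 < δ2)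
    (hx0 : 0 < x0) (hy0 : 0 < y0)
    (hreg : δ2 * y0 ≤ δ1 * x0)
    (hXdist : Measure.map X μ = expMeasure (1 / ΩX))
    (hYdist : Measure.map Y μ = expMeasure (1 / ΩY))
    (PRst : ℝ → ℝ → ℝ)
    (hPRst : ∀ x y, PRst x y =
      if x0 ≤ x ∧ y0 ≤ y then max (δ1 / y) (δ2 / x) else 0) :
    ∫ ω, PRst (X ω) (Y ω) ∂μ =
      (δ1 / ΩY) * Real.exp (-x0 / ΩX) *
        (expInt (y0 / ΩY) - expInt (δ1 * x0 / (δ2 * ΩY)))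
      + (δ1 / ΩY + δ2 / ΩX) * expInt (x0 / ΩX + δ1 * x0 / (δ2 * ΩY)) := by
  have hrX : (0 : ℝ) < 1 / ΩX := by positivity
  have hrY : (0 : ℝ) < 1 / ΩY := by positivity
  haveI hP1 : IsProbabilityMeasure (expMeasure (1 / ΩX)) :=
    isProbabilityMeasure_expMeasure hrX
  haveI hP2 : IsProbabilityMeasure (expMeasure (1 / ΩY)) :=
    isProbabilityMeasure_expMeasure hrY
  set g : ℝ × ℝ → ℝ :=
    fun p => if x0 ≤ p.1 ∧ y0 ≤ p.2 then max (δ1 / p.2) (δ2 / p.1) else 0 with hg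
  have hgmeas : Measurable g := by
    rw [hg]
    refine Measurable.ite ?_ ?_ measurable_const
    · exact (measurableSet_le measurable_const measurable_fst).inter
        (measurableSet_le measurable_const measurable_snd)
    · exact (measurable_const.div measurable_snd).max (measurable_const.div measurable_fst)
  have hmap : μ.map (fun ω => (X ω, Y ω))
      = (expMeasure (1 / ΩX)).prod (expMeasure (1 / ΩY)) := by
    rw [← hXdist, ← hYdist]
    exact (indepFun_iff_map_prod_eq_prod_map_map hX.aemeasurable hY.aemeasurable).mp hindep
  have h0 : ∫ ω, PRst (X ω) (Y ω) ∂μ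
      = ∫ p, g p ∂((expMeasure (1 / ΩX)).prod (expMeasure (1 / ΩY))) := by
    rw [← hmap, integral_map (hX.aemeasurable.prodMk hY.aemeasurable)
      hgmeas.aestronglyMeasurable]
    refine integral_congr_ae (Filter.Eventually.of_forall fun ω => ?_)
    simp only [hPRst, hg]
  have hgint : Integrable g ((expMeasure (1 / ΩX)).prod (expMeasure (1 / ΩY))) := by
    refine Integrable.mono' (integrable_const (δ1 / y0 + δ2 / x0))
      hgmeas.aestronglyMeasurable ?_
    refine Filter.Eventually.of_forall fun p => ?_
    rw [hg]
    by_cases hc : x0 ≤ p.1 ∧ y0 ≤ p.2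
    · have hp1 : 0 < p.1 := hx0.trans_le hc.1
      have hp2 : 0 < p.2 := hy0.trans_le hc.2
      simp only [if_pos hc]
      rw [Real.norm_eq_abs, abs_of_nonneg (le_trans (div_nonneg hδ1.le hp2.le)
        (le_max_left _ _))]
      refine max_le ?_ ?_
      · exact le_add_of_le_of_nonneg (div_le_div_of_nonneg_left hδ1.le hy0 hc.2)
          (div_nonneg hδ2.le hx0.le)
      · exact le_add_of_nonneg_of_le (div_nonneg hδ1.le hy0.le)
          (div_le_div_of_nonneg_left hδ2.le hx0 hc.1)
    · simp only [if_neg hc, norm_zero]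
      positivity
  rw [h0, integral_prod _ hgint]
  have hinner : ∀ x : ℝ, (∫ y, g (x, y) ∂(expMeasure (1 / ΩY)))
      = (if x0 ≤ x then
          (δ1 * (1 / ΩY) * (expInt ((1 / ΩY) * y0) - expInt ((1 / ΩY) * (δ1 * x / δ2)))
            + (δ2 / x) * Real.exp (-((1 / ΩY) * (δ1 * x / δ2)))) else 0) := by
    intro x
    rw [integral_expMeasure hrY]
    by_cases hx : x0 ≤ x
    · rw [if_pos hx]
      have hM : δ2 * y0 ≤ δ1 * x :=
        hreg.trans (mul_le_mul_of_nonneg_left hx hδ1.le)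
      have h := inner_eval hrY hδ1 hδ2 hx0 hy0 hx hM
      rw [← h]
    · rw [if_neg hx]
      have hz : ∀ y : ℝ, exponentialPDFReal (1 / ΩY) y * g (x, y) = 0 := by
        intro y
        rw [hg]
        simp only
        rw [if_neg (fun h => hx h.1), mul_zero]
      simp only [hz, integral_zero]
  simp only [hinner]
  rw [integral_expMeasure hrX, outer_eval hrX hrY hδ1 hδ2 hx0 hy0]
  rw [show -((1 / ΩX) * x0) = -x0 / ΩX by ring,
    show (1 / ΩY) * y0 = y0 / ΩY by ring,
    show ((1 / ΩY) * δ1 / δ2) * x0 = δ1 * x0 / (δ2 * ΩY) by first | (field_simp; ring) | field_simp,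
    show ((1 / ΩX) + (1 / ΩY) * δ1 / δ2) * x0 = x0 / ΩX + δ1 * x0 / (δ2 * ΩY) by
      first | (field_simp; ring) | field_simp]
  ring
end

section
/- Let X and Y be independent exponentially distributed random variables with means Ω_X > 0 and Ω_Y > 0, let δ1, δ2, x0, y0, ρ > 0 with δ2·y0 > δ1·x0 and ρ ≥ δ1/y0, and set λ1 = max{x0, δ2/ρ} and λ2 = max{y0, δ1/ρ}. Then the system outage probability, i.e., the probability of the complement of the event {X ≥ x0, Y ≥ y0, max{δ1/Y, δ2/X} ≤ ρ}, equals 1 − e^{−y0/Ω_Y}·e^{−λ1/Ω_X} − e^{−λ2·(1/Ω_Y + δ2/(δ1·Ω_X))} + (δ1·Ω_X/(δ1·Ω_X + δ2·Ω_Y))·e^{−y0·(1/Ω_Y + δ2/(δ1·Ω_X))} + (δ2·Ω_Y/(δ1·Ω_X + δ2·Ω_Y))·e^{−λ2·(1/Ω_Y + δ2/(δ1·Ω_X))}. -/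
open MeasureTheory ProbabilityTheory
open scoped ENNReal

lemma expMeasure_singleton (r a : ℝ) : expMeasure r {a} = 0 := by
  rw [expMeasure, gammaMeasure, withDensity_apply _ (measurableSet_singleton a),
    Measure.restrict_eq_zero.mpr (by simp)]
  simp

lemma expMeasure_Iic {r : ℝ} (hr : 0 < r) (a : ℝ) :
    expMeasure r (Set.Iic a) = ENNReal.ofReal (if 0 ≤ a then 1 - Real.exp (-(r * a)) else 0) := by
  rw [expMeasure, gammaMeasure, withDensity_apply _ measurableSet_Iic]
  exact lintegral_exponentialPDF_eq_antiDeriv hr a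

lemma expMeasure_Ici {r a : ℝ} (hr : 0 < r) (ha : 0 ≤ a) :
    expMeasure r (Set.Ici a) = ENNReal.ofReal (Real.exp (-(r * a))) := by
  have hprob : IsProbabilityMeasure (expMeasure r) := isProbabilityMeasure_expMeasure hr
  have hIoi : expMeasure r (Set.Ioi a) = ENNReal.ofReal (Real.exp (-(r * a))) := by
    have h1 : Set.Ioi a = (Set.Iic a)ᶜ := Set.compl_Iic.symm
    rw [h1, measure_compl measurableSet_Iic (measure_ne_top _ _), measure_univ,
      expMeasure_Iic hr a, if_pos ha]
    have he : Real.exp (-(r * a)) ≤ 1 := by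
      rw [Real.exp_le_one_iff]
      nlinarith
    rw [show (1 : ℝ≥0∞) = ENNReal.ofReal 1 by simp,
      ← ENNReal.ofReal_sub 1 (by linarith : (0:ℝ) ≤ 1 - Real.exp (-(r * a)))]
    norm_num
  refine le_antisymm ?_ (le_trans (le_of_eq hIoi.symm) (measure_mono Set.Ioi_subset_Ici_self))
  calc expMeasure r (Set.Ici a) ≤ expMeasure r (Set.Ioi a ∪ {a}) := by
        refine measure_mono fun x hx => ?_
        rcases eq_or_lt_of_le (Set.mem_Ici.mp hx) with h | h
        · exact Or.inr (by simp [h.symm])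
        · exact Or.inl h
    _ ≤ expMeasure r (Set.Ioi a) + expMeasure r {a} := measure_union_le _ _
    _ = ENNReal.ofReal (Real.exp (-(r * a))) := by
        rw [expMeasure_singleton, add_zero, hIoi]

/-- closed-form system outage probability for the regime
`δ2 y0 > δ1 x0`, `ρ ≥ δ1/y0`, with `λ1 = max x0 (δ2/ρ)`, `λ2 = max y0 (δ1/ρ)`. -/
theorem stmt_14 {Ωsp : Type*} [MeasurableSpace Ωsp] (μ : Measure Ωsp)
    [IsProbabilityMeasure μ]
    (X Y : Ωsp → ℝ) (hX : Measurable X) (hY : Measurable Y)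
    (hindep : IndepFun X Y μ)
    (ΩX ΩY δ1 δ2 x0 y0 ρ : ℝ)
    (hΩX : 0 < ΩX) (hΩY : 0 < ΩY) (hδ1 : 0 < δ1) (hδ2 : 0 < δ2)
    (hx0 : 0 < x0) (hy0 : 0 < y0) (hρ : 0 < ρ)
    (hreg : δ1 * x0 < δ2 * y0) (hρge : δ1 / y0 ≤ ρ)
    (hXdist : Measure.map X μ = expMeasure (1 / ΩX))
    (hYdist : Measure.map Y μ = expMeasure (1 / ΩY))
    (lam1 lam2 : ℝ) (hlam1 : lam1 = max x0 (δ2 / ρ)) (hlam2 : lam2 = max y0 (δ1 / ρ)) :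
    μ {ω | x0 ≤ X ω ∧ y0 ≤ Y ω ∧ max (δ1 / Y ω) (δ2 / X ω) ≤ ρ}ᶜ =
      ENNReal.ofReal (1
        - Real.exp (-y0 / ΩY) * Real.exp (-lam1 / ΩX)
        - Real.exp (-lam2 * (1 / ΩY + δ2 / (δ1 * ΩX)))
        + (δ1 * ΩX / (δ1 * ΩX + δ2 * ΩY)) * Real.exp (-y0 * (1 / ΩY + δ2 / (δ1 * ΩX)))
        + (δ2 * ΩY / (δ1 * ΩX + δ2 * ΩY)) *
            Real.exp (-lam2 * (1 / ΩY + δ2 / (δ1 * ΩX)))) := by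
  -- lam2 = y0 in this regime
  have hl2 : lam2 = y0 := by
    rw [hlam2, max_eq_left]
    rw [div_le_iff₀ hρ]
    rw [div_le_iff₀ hy0] at hρge
    nlinarith
  have hlam1x0 : x0 ≤ lam1 := hlam1 ▸ le_max_left _ _
  have hlam1pos : 0 < lam1 := lt_of_lt_of_le hx0 hlam1x0
  -- RHS simplification
  have hsum : 0 < δ1 * ΩX + δ2 * ΩY := by positivity
  have hAB : δ1 * ΩX / (δ1 * ΩX + δ2 * ΩY) + δ2 * ΩY / (δ1 * ΩX + δ2 * ΩY) = 1 := by
    field_simp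
  have hRHS : (1
        - Real.exp (-y0 / ΩY) * Real.exp (-lam1 / ΩX)
        - Real.exp (-lam2 * (1 / ΩY + δ2 / (δ1 * ΩX)))
        + (δ1 * ΩX / (δ1 * ΩX + δ2 * ΩY)) * Real.exp (-y0 * (1 / ΩY + δ2 / (δ1 * ΩX)))
        + (δ2 * ΩY / (δ1 * ΩX + δ2 * ΩY)) *
            Real.exp (-lam2 * (1 / ΩY + δ2 / (δ1 * ΩX))))
      = 1 - Real.exp (-y0 / ΩY) * Real.exp (-lam1 / ΩX) := by
    rw [hl2]
    linear_combination Real.exp (-y0 * (1 / ΩY + δ2 / (δ1 * ΩX))) * hAB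
  rw [hRHS]
  -- the event equals a product of preimages
  have hset : {ω | x0 ≤ X ω ∧ y0 ≤ Y ω ∧ max (δ1 / Y ω) (δ2 / X ω) ≤ ρ}
      = X ⁻¹' Set.Ici lam1 ∩ Y ⁻¹' Set.Ici y0 := by
    ext ω
    simp only [Set.mem_setOf_eq, Set.mem_inter_iff, Set.mem_preimage, Set.mem_Ici, max_le_iff]
    constructor
    · rintro ⟨hx, hy, h1, h2⟩
      have hXpos : 0 < X ω := lt_of_lt_of_le hx0 hx
      refine ⟨?_, hy⟩
      rw [hlam1]
      refine max_le hx ?_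
      rw [div_le_iff₀ hρ]
      rw [div_le_iff₀ hXpos] at h2
      nlinarith
    · rintro ⟨hx, hy⟩
      have hx0X : x0 ≤ X ω := le_trans (hlam1 ▸ le_max_left _ _) hx
      have hXpos : 0 < X ω := lt_of_lt_of_le hx0 hx0X
      have hYpos : 0 < Y ω := lt_of_lt_of_le hy0 hy
      refine ⟨hx0X, hy, ?_, ?_⟩
      · rw [div_le_iff₀ hYpos]
        rw [div_le_iff₀ hy0] at hρge
        nlinarith
      · rw [div_le_iff₀ hXpos]
        have : δ2 / ρ ≤ X ω := le_trans (hlam1 ▸ le_max_right _ _) hx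
        rw [div_le_iff₀ hρ] at this
        nlinarith
  have hXmeas : μ (X ⁻¹' Set.Ici lam1) = ENNReal.ofReal (Real.exp (-(1 / ΩX * lam1))) := by
    rw [← Measure.map_apply hX measurableSet_Ici, hXdist,
      expMeasure_Ici (by positivity) hlam1pos.le]
  have hYmeas : μ (Y ⁻¹' Set.Ici y0) = ENNReal.ofReal (Real.exp (-(1 / ΩY * y0))) := by
    rw [← Measure.map_apply hY measurableSet_Ici, hYdist,
      expMeasure_Ici (by positivity) hy0.le]
  have hprod : μ {ω | x0 ≤ X ω ∧ y0 ≤ Y ω ∧ max (δ1 / Y ω) (δ2 / X ω) ≤ ρ}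
      = ENNReal.ofReal (Real.exp (-y0 / ΩY) * Real.exp (-lam1 / ΩX)) := by
    rw [hset, hindep.measure_inter_preimage_eq_mul _ _ measurableSet_Ici measurableSet_Ici,
      hXmeas, hYmeas, ← ENNReal.ofReal_mul (Real.exp_nonneg _)]
    congr 1
    rw [mul_comm]
    congr 2 <;> field_simp
  have hmeasS : MeasurableSet {ω | x0 ≤ X ω ∧ y0 ≤ Y ω ∧ max (δ1 / Y ω) (δ2 / X ω) ≤ ρ} := by
    rw [hset]
    exact (hX measurableSet_Ici).inter (hY measurableSet_Ici)
  rw [measure_compl hmeasS (measure_ne_top _ _), measure_univ, hprod,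
    show (1 : ℝ≥0∞) = ENNReal.ofReal 1 by simp,
    ← ENNReal.ofReal_sub 1 (by positivity)]
end
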